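/- Let A(μ) : V → V* be the family of operators associated with the uniformly continuous and uniformly coercive family of inner products a(μ;·,·) on V via a(μ;u,v) = ⟨A(μ)u,v⟩_{V*,V}. Then the parameter-dependent bilinear form b(μ;v,w) := ∫₀ᵀ (v_t + A(μ)v, w_t + A(μ)w)_{V*} + (v(0),w(0))_H is uniformly continuous and uniformly coercive on W(0,T) with respect to μ, i.e. there exist constants independent of μ bounding b(μ;·,·) from above and providing a coercivity lower bound. -/

import Mathlib

/-!
Abstract setup for the least-squares space-time formulation of the abstract
parabolic (heat) equation, following Hinze–Kahle.

* `V, H` are separable real Hilbert spaces forming a Gelfand triple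
  `V ↪ H ≡ H* ↪ V*` via the embedding `ι : V →L[ℝ] H`.
* `A : V → V*` is linear, bounded, selfadjoint, coercive and boundedly
  invertible with inverse the Riesz lift `R : V* → V`, i.e.
  `⟨l,v⟩_{V*,V} = (R l, v)_V`.  The dual inner product is
  `(l,k)_{V*} = (R l, R k)_V`.
* `W` is the space `W(0,T) = {v ∈ L²(0,T;V) : vₜ ∈ L²(0,T;V*)}`; an element
  `w : W` has an `L²(0,T;V)`-representative `val w : ℝ → V` (whose composition
  with `ι` is the continuous `H`-valued representative) and a weak time
  derivative `dt w : ℝ → V*`.  The `W(0,T)`-inner product is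
  `(u,w) = ∫₀ᵀ (uₜ,wₜ)_{V*} + ∫₀ᵀ (u,w)_V`, the embedding
  `W(0,T) ↪ C([0,T];H)` is continuous, and the fundamental
  integration-by-parts identity
  `‖w(T)‖²_H - ‖w(0)‖²_H = 2∫₀ᵀ ⟨wₜ,w⟩` holds.
-/

open MeasureTheory
open scoped RealInnerProductSpace

noncomputable section

structure SpaceTimeSetup (V H W : Type*)
    [NormedAddCommGroup V] [InnerProductSpace ℝ V] [CompleteSpace V]
    [NormedAddCommGroup H] [InnerProductSpace ℝ H] [CompleteSpace H]
    [NormedAddCommGroup W] [InnerProductSpace ℝ W] [CompleteSpace W] where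
  /-- the final time `T > 0` -/
  T : ℝ
  T_pos : 0 < T
  /-- the embedding `V ↪ H` of the Gelfand triple -/
  ι : V →L[ℝ] H
  ι_inj : Function.Injective ι
  /-- the operator `A : V → V*` -/
  A : V →L[ℝ] StrongDual ℝ V
  /-- the Riesz lift `R = A⁻¹ : V* → V` -/
  R : StrongDual ℝ V →L[ℝ] V
  /-- `⟨l,v⟩_{V*,V} = (R l, v)_V` -/
  riesz : ∀ (l : StrongDual ℝ V) (v : V), l v = ⟪R l, v⟫
  R_A : ∀ v : V, R (A v) = v
  A_R : ∀ l : StrongDual ℝ V, A (R l) = l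
  /-- the `L²(0,T;V)`-representative of an element of `W(0,T)` -/
  val : W →ₗ[ℝ] (ℝ → V)
  /-- the weak time derivative, an element of `L²(0,T;V*)` -/
  dt : W →ₗ[ℝ] (ℝ → StrongDual ℝ V)
  int_val : ∀ u w : W, IntervalIntegrable (fun t => ⟪val u t, val w t⟫) volume 0 T
  int_dt : ∀ u w : W,
    IntervalIntegrable (fun t => ⟪R (dt u t), R (dt w t)⟫) volume 0 T
  int_mix : ∀ u w : W, IntervalIntegrable (fun t => dt u t (val w t)) volume 0 T
  /-- the canonical inner product of `W(0,T)` -/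
  inner_def : ∀ u w : W, ⟪u, w⟫ =
    (∫ t in (0:ℝ)..T, ⟪R (dt u t), R (dt w t)⟫) +
      ∫ t in (0:ℝ)..T, ⟪val u t, val w t⟫
  /-- the continuous embedding `W(0,T) ↪ C([0,T];H)` -/
  emb : ∃ C > 0, ∀ (w : W) (t : ℝ), t ∈ Set.Icc 0 T → ‖ι (val w t)‖ ≤ C * ‖w‖
  /-- `‖w(T)‖²_H - ‖w(0)‖²_H = 2 ∫₀ᵀ ⟨wₜ, w⟩_{V*,V}` -/
  ftc : ∀ w : W, ‖ι (val w T)‖ ^ 2 - ‖ι (val w 0)‖ ^ 2 =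
    2 * ∫ t in (0:ℝ)..T, dt w t (val w t)

variable {V H W : Type*}
    [NormedAddCommGroup V] [InnerProductSpace ℝ V] [CompleteSpace V]
    [NormedAddCommGroup H] [InnerProductSpace ℝ H] [CompleteSpace H]
    [NormedAddCommGroup W] [InnerProductSpace ℝ W] [CompleteSpace W]

/-- the least-squares bilinear form
`b(v,w) = ∫₀ᵀ (vₜ + A v, wₜ + A w)_{V*} + (v(0), w(0))_H` -/
def SpaceTimeSetup.b (S : SpaceTimeSetup V H W) (v w : W) : ℝ :=
  (∫ t in (0:ℝ)..S.T,
      ⟪S.R (S.dt v t + S.A (S.val v t)), S.R (S.dt w t + S.A (S.val w t))⟫) +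
    ⟪S.ι (S.val v 0), S.ι (S.val w 0)⟫

/-- the right-hand side linear form
`l(v) = ∫₀ᵀ (f, vₜ + A v)_{V*} + (y₀, v(0))_H` -/
def SpaceTimeSetup.lform (S : SpaceTimeSetup V H W)
    (f : ℝ → StrongDual ℝ V) (y₀ : H) (v : W) : ℝ :=
  (∫ t in (0:ℝ)..S.T, ⟪S.R (f t), S.R (S.dt v t + S.A (S.val v t))⟫) +
    ⟪y₀, S.ι (S.val v 0)⟫

/-- the parameter-dependent least-squares bilinear form
`b(μ;v,w) = ∫₀ᵀ (vₜ + A(μ) v, wₜ + A(μ) w)_{V*} + (v(0), w(0))_H`,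
for an operator `A' = A(μ)`. -/
def SpaceTimeSetup.bmu (S : SpaceTimeSetup V H W)
    (A' : V →L[ℝ] StrongDual ℝ V) (v w : W) : ℝ :=
  (∫ t in (0:ℝ)..S.T,
      ⟪S.R (S.dt v t + A' (S.val v t)), S.R (S.dt w t + A' (S.val w t))⟫) +
    ⟪S.ι (S.val v 0), S.ι (S.val w 0)⟫

/-! ### Auxiliary lemmas -/

/-- The Riesz lift `R` is an isometry. -/
lemma SpaceTimeSetup.norm_R (S : SpaceTimeSetup V H W) (l : StrongDual ℝ V) :
    ‖S.R l‖ = ‖l‖ := by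
  refine le_antisymm ?_ ?_
  · rcases eq_or_ne (S.R l) 0 with h | h
    · simp [h]
    · have h1 : ‖S.R l‖ * ‖S.R l‖ = l (S.R l) := by
        rw [S.riesz, real_inner_self_eq_norm_mul_norm]
      have h2 : l (S.R l) ≤ ‖l‖ * ‖S.R l‖ :=
        le_trans (le_abs_self _) (by rw [← Real.norm_eq_abs]; exact l.le_opNorm _)
      exact le_of_mul_le_mul_right (h1 ▸ h2) (norm_pos_iff.mpr h)
  · refine l.opNorm_le_bound (norm_nonneg _) fun v => ?_
    rw [S.riesz, Real.norm_eq_abs]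
    exact abs_real_inner_le_norm _ _

/-- The `V`-valued representative of `vₜ + A' v`. -/
def SpaceTimeSetup.gfun (S : SpaceTimeSetup V H W)
    (A' : V →L[ℝ] StrongDual ℝ V) (v : W) (t : ℝ) : V :=
  S.R (S.dt v t + A' (S.val v t))

lemma SpaceTimeSetup.bmu_eq (S : SpaceTimeSetup V H W)
    (A' : V →L[ℝ] StrongDual ℝ V) (v w : W) :
    S.bmu A' v w =
      (∫ t in (0:ℝ)..S.T, ⟪S.gfun A' v t, S.gfun A' w t⟫) +
        ⟪S.ι (S.val v 0), S.ι (S.val w 0)⟫ := rfl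

lemma SpaceTimeSetup.gfun_add_smul (S : SpaceTimeSetup V H W)
    (A' : V →L[ℝ] StrongDual ℝ V) (v w : W) (c : ℝ) (t : ℝ) :
    S.gfun A' (v + c • w) t = S.gfun A' v t + c • S.gfun A' w t := by
  simp only [SpaceTimeSetup.gfun, map_add, _root_.map_smul, Pi.add_apply, Pi.smul_apply, smul_add]
  abel

lemma SpaceTimeSetup.val_add_smul (S : SpaceTimeSetup V H W) (v w : W) (c : ℝ) (t : ℝ) :
    S.val (v + c • w) t = S.val v t + c • S.val w t := by
  simp only [map_add, _root_.map_smul, Pi.add_apply, Pi.smul_apply]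

set_option maxHeartbeats 2000000 in
/-- for the family of operators `A(μ) : V → V*` associated
with the uniformly continuous and uniformly coercive family of inner products
`a(μ;·,·)` via `a(μ;u,v) = ⟨A(μ)u, v⟩_{V*,V}`, the parameter-dependent
bilinear form `b(μ;·,·)` is uniformly continuous and uniformly coercive on
`W(0,T)` with respect to `μ`. -/
theorem bmu_uniformly_bounded_coercive (S : SpaceTimeSetup V H W)
    {P : Type*} (a : P → V →ₗ[ℝ] V →ₗ[ℝ] ℝ)
    (Amu : P → V →L[ℝ] StrongDual ℝ V)
    (hAa : ∀ (μ : P) (u v : V), Amu μ u v = a μ u v)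
    (hsymm : ∀ (μ : P) (u v : V), a μ u v = a μ v u)
    (cs cc : ℝ) (hcs : 0 < cs) (hcc : 0 < cc)
    (hbound : ∀ (μ : P) (u v : V), |a μ u v| ≤ cs * ‖u‖ * ‖v‖)
    (hcoer : ∀ (μ : P) (u : V), cc * ‖u‖ ^ 2 ≤ a μ u u)
    (hint : ∀ (μ : P) (u w : W), IntervalIntegrable
      (fun t => ⟪S.R (S.dt u t + Amu μ (S.val u t)),
        S.R (S.dt w t + Amu μ (S.val w t))⟫) volume 0 S.T) :
    (∃ Cb > 0, ∀ (μ : P) (v w : W), |S.bmu (Amu μ) v w| ≤ Cb * ‖v‖ * ‖w‖) ∧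
    (∃ Cc > 0, ∀ (μ : P) (v : W), Cc * ‖v‖ ^ 2 ≤ S.bmu (Amu μ) v v) := by
  obtain ⟨Ce, hCe, hemb⟩ := S.emb
  have hT : (0:ℝ) ≤ S.T := S.T_pos.le
  -- interval integrability restated via `gfun`
  have hint' : ∀ (μ : P) (u w : W), IntervalIntegrable
      (fun t => ⟪S.gfun (Amu μ) u t, S.gfun (Amu μ) w t⟫) volume 0 S.T :=
    fun μ u w => hint μ u w
  -- uniform bound for `Amu μ`
  have hAnorm : ∀ (μ : P) (u : V), ‖S.R (Amu μ u)‖ ≤ cs * ‖u‖ := by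
    intro μ u
    rw [S.norm_R]
    refine ContinuousLinearMap.opNorm_le_bound _ (by positivity) fun x => ?_
    rw [hAa, Real.norm_eq_abs, mul_assoc]
    exact le_trans (hbound μ u x) (by rw [mul_assoc])
  -- abbreviations for the three diagonal integrals
  have hnormsq : ∀ v : W, ‖v‖ ^ 2 =
      (∫ t in (0:ℝ)..S.T, ⟪S.R (S.dt v t), S.R (S.dt v t)⟫) +
        ∫ t in (0:ℝ)..S.T, ⟪S.val v t, S.val v t⟫ :=
    fun v => (real_inner_self_eq_norm_sq v).symm.trans (S.inner_def v v)
  have hIg_nonneg : ∀ (μ : P) (v : W),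
      0 ≤ ∫ t in (0:ℝ)..S.T, ⟪S.gfun (Amu μ) v t, S.gfun (Amu μ) v t⟫ :=
    fun μ v => intervalIntegral.integral_nonneg hT fun t _ => real_inner_self_nonneg
  have hId_nonneg : ∀ v : W,
      0 ≤ ∫ t in (0:ℝ)..S.T, ⟪S.R (S.dt v t), S.R (S.dt v t)⟫ :=
    fun v => intervalIntegral.integral_nonneg hT fun t _ => real_inner_self_nonneg
  have hIv_nonneg : ∀ v : W,
      0 ≤ ∫ t in (0:ℝ)..S.T, ⟪S.val v t, S.val v t⟫ :=
    fun v => intervalIntegral.integral_nonneg hT fun t _ => real_inner_self_nonneg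
  have hE0 : ∀ v : W, ‖S.ι (S.val v 0)‖ ≤ Ce * ‖v‖ :=
    fun v => hemb v 0 ⟨le_refl 0, hT⟩
  -- pointwise diagonal upper bound
  have pg : ∀ (μ : P) (v : W) (t : ℝ),
      ⟪S.gfun (Amu μ) v t, S.gfun (Amu μ) v t⟫ ≤
        2 * ⟪S.R (S.dt v t), S.R (S.dt v t)⟫ + 2 * cs ^ 2 * ⟪S.val v t, S.val v t⟫ := by
    intro μ v t
    have hgd : S.gfun (Amu μ) v t = S.R (S.dt v t) + S.R (Amu μ (S.val v t)) := by
      simp [SpaceTimeSetup.gfun, map_add]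
    rw [hgd, real_inner_self_eq_norm_sq, real_inner_self_eq_norm_sq,
      real_inner_self_eq_norm_sq]
    have h1 := norm_add_le (S.R (S.dt v t)) (S.R (Amu μ (S.val v t)))
    have h2 := hAnorm μ (S.val v t)
    have h3 := norm_nonneg (S.R (S.dt v t))
    have h4 := norm_nonneg (S.R (Amu μ (S.val v t)))
    have h5 := norm_nonneg (S.val v t)
    have h6 := norm_nonneg (S.R (S.dt v t) + S.R (Amu μ (S.val v t)))
    nlinarith [sq_nonneg (‖S.R (S.dt v t)‖ - ‖S.R (Amu μ (S.val v t))‖),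
      sq_nonneg (‖S.R (S.dt v t)‖ + ‖S.R (Amu μ (S.val v t))‖), hcs.le,
      mul_le_mul h1 h1 h6 (by positivity)]
  -- pointwise lower bound for the time derivative part
  have pd : ∀ (μ : P) (v : W) (t : ℝ),
      ⟪S.R (S.dt v t), S.R (S.dt v t)⟫ ≤
        2 * ⟪S.gfun (Amu μ) v t, S.gfun (Amu μ) v t⟫ +
          2 * cs ^ 2 * ⟪S.val v t, S.val v t⟫ := by
    intro μ v t
    have hgd : S.R (S.dt v t) = S.gfun (Amu μ) v t - S.R (Amu μ (S.val v t)) := by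
      simp [SpaceTimeSetup.gfun, map_add]
    rw [real_inner_self_eq_norm_sq, real_inner_self_eq_norm_sq,
      real_inner_self_eq_norm_sq, hgd]
    have h1 := norm_sub_le (S.gfun (Amu μ) v t) (S.R (Amu μ (S.val v t)))
    have h2 := hAnorm μ (S.val v t)
    have h3 := norm_nonneg (S.gfun (Amu μ) v t)
    have h4 := norm_nonneg (S.R (Amu μ (S.val v t)))
    have h5 := norm_nonneg (S.val v t)
    have h6 := norm_nonneg (S.gfun (Amu μ) v t - S.R (Amu μ (S.val v t)))
    nlinarith [sq_nonneg (‖S.gfun (Amu μ) v t‖ - ‖S.R (Amu μ (S.val v t))‖),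
      sq_nonneg (‖S.gfun (Amu μ) v t‖ + ‖S.R (Amu μ (S.val v t))‖), hcs.le,
      mul_le_mul h1 h1 h6 (by positivity)]
  -- pointwise coercivity estimate
  have pc : ∀ (μ : P) (v : W) (t : ℝ),
      cc ^ 2 * ⟪S.val v t, S.val v t⟫ + 2 * cc * (S.dt v t (S.val v t)) ≤
        ⟪S.gfun (Amu μ) v t, S.gfun (Amu μ) v t⟫ := by
    intro μ v t
    have e1 : ⟪S.gfun (Amu μ) v t, S.val v t⟫
        = S.dt v t (S.val v t) + a μ (S.val v t) (S.val v t) := by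
      rw [SpaceTimeSetup.gfun, ← S.riesz, ContinuousLinearMap.add_apply, hAa]
    have e2 : ⟪S.gfun (Amu μ) v t, S.val v t⟫ ≤ ‖S.gfun (Amu μ) v t‖ * ‖S.val v t‖ :=
      real_inner_le_norm _ _
    have e3 := hcoer μ (S.val v t)
    rw [real_inner_self_eq_norm_sq, real_inner_self_eq_norm_sq]
    nlinarith [sq_nonneg (‖S.gfun (Amu μ) v t‖ - cc * ‖S.val v t‖), hcc.le,
      norm_nonneg (S.val v t), norm_nonneg (S.gfun (Amu μ) v t)]
  -- integrated diagonal upper bound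
  have Igle : ∀ (μ : P) (v : W),
      (∫ t in (0:ℝ)..S.T, ⟪S.gfun (Amu μ) v t, S.gfun (Amu μ) v t⟫) ≤
        2 * (∫ t in (0:ℝ)..S.T, ⟪S.R (S.dt v t), S.R (S.dt v t)⟫) +
          2 * cs ^ 2 * ∫ t in (0:ℝ)..S.T, ⟪S.val v t, S.val v t⟫ := by
    intro μ v
    have h := intervalIntegral.integral_mono_on hT (hint' μ v v)
      (((S.int_dt v v).const_mul 2).add ((S.int_val v v).const_mul (2 * cs ^ 2)))
      (fun t _ => pg μ v t)
    rwa [intervalIntegral.integral_add ((S.int_dt v v).const_mul 2)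
      ((S.int_val v v).const_mul (2 * cs ^ 2)),
      intervalIntegral.integral_const_mul, intervalIntegral.integral_const_mul] at h
  -- integrated bound for the time-derivative part
  have Idle : ∀ (μ : P) (v : W),
      (∫ t in (0:ℝ)..S.T, ⟪S.R (S.dt v t), S.R (S.dt v t)⟫) ≤
        2 * (∫ t in (0:ℝ)..S.T, ⟪S.gfun (Amu μ) v t, S.gfun (Amu μ) v t⟫) +
          2 * cs ^ 2 * ∫ t in (0:ℝ)..S.T, ⟪S.val v t, S.val v t⟫ := by
    intro μ v
    have h := intervalIntegral.integral_mono_on hT (S.int_dt v v)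
      (((hint' μ v v).const_mul 2).add ((S.int_val v v).const_mul (2 * cs ^ 2)))
      (fun t _ => pd μ v t)
    rwa [intervalIntegral.integral_add ((hint' μ v v).const_mul 2)
      ((S.int_val v v).const_mul (2 * cs ^ 2)),
      intervalIntegral.integral_const_mul, intervalIntegral.integral_const_mul] at h
  -- integrated coercivity estimate
  have Ico : ∀ (μ : P) (v : W),
      cc ^ 2 * (∫ t in (0:ℝ)..S.T, ⟪S.val v t, S.val v t⟫) +
          2 * cc * (∫ t in (0:ℝ)..S.T, S.dt v t (S.val v t)) ≤
        ∫ t in (0:ℝ)..S.T, ⟪S.gfun (Amu μ) v t, S.gfun (Amu μ) v t⟫ := by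
    intro μ v
    have h := intervalIntegral.integral_mono_on hT
      (((S.int_val v v).const_mul (cc ^ 2)).add ((S.int_mix v v).const_mul (2 * cc)))
      (hint' μ v v) (fun t _ => pc μ v t)
    rwa [intervalIntegral.integral_add ((S.int_val v v).const_mul (cc ^ 2))
      ((S.int_mix v v).const_mul (2 * cc)),
      intervalIntegral.integral_const_mul, intervalIntegral.integral_const_mul] at h
  -- diagonal upper bound: b(μ;v,v) ≤ Cb ‖v‖²
  have hdiag : ∀ (μ : P) (v : W),
      S.bmu (Amu μ) v v ≤ (2 + 2 * cs ^ 2 + Ce ^ 2) * ‖v‖ ^ 2 := by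
    intro μ v
    rw [S.bmu_eq, real_inner_self_eq_norm_sq]
    have h1 := Igle μ v
    have h2 := hE0 v
    have h3 := hnormsq v
    have h4 := hId_nonneg v
    have h5 := hIv_nonneg v
    nlinarith [norm_nonneg (S.ι (S.val v 0)), norm_nonneg v, hcs.le, sq_nonneg cs,
      mul_le_mul h2 h2 (norm_nonneg _) (by positivity),
      mul_nonneg (mul_nonneg hcs.le hcs.le) h4,
      mul_nonneg (mul_nonneg hcs.le hcs.le) h5]
  -- diagonal nonnegativity
  have hdnn : ∀ (μ : P) (v : W), 0 ≤ S.bmu (Amu μ) v v := by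
    intro μ v
    rw [S.bmu_eq]
    exact add_nonneg (hIg_nonneg μ v) real_inner_self_nonneg
  -- expansion of the quadratic form
  have hexp : ∀ (μ : P) (v w : W) (c : ℝ),
      S.bmu (Amu μ) (v + c • w) (v + c • w) =
        S.bmu (Amu μ) v v + (2 * S.bmu (Amu μ) v w) * c +
          S.bmu (Amu μ) w w * (c * c) := by
    intro μ v w c
    have key : ∀ t : ℝ,
        ⟪S.gfun (Amu μ) (v + c • w) t, S.gfun (Amu μ) (v + c • w) t⟫ =
          ⟪S.gfun (Amu μ) v t, S.gfun (Amu μ) v t⟫ +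
            ((2 * c) * ⟪S.gfun (Amu μ) v t, S.gfun (Amu μ) w t⟫ +
              (c * c) * ⟪S.gfun (Amu μ) w t, S.gfun (Amu μ) w t⟫) := by
      intro t
      rw [S.gfun_add_smul, real_inner_add_add_self, real_inner_smul_right,
        real_inner_smul_left, real_inner_smul_right]
      ring
    have hI : (∫ t in (0:ℝ)..S.T,
          ⟪S.gfun (Amu μ) (v + c • w) t, S.gfun (Amu μ) (v + c • w) t⟫) =
        (∫ t in (0:ℝ)..S.T, ⟪S.gfun (Amu μ) v t, S.gfun (Amu μ) v t⟫) +
          ((2 * c) * (∫ t in (0:ℝ)..S.T, ⟪S.gfun (Amu μ) v t, S.gfun (Amu μ) w t⟫) +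
            (c * c) * ∫ t in (0:ℝ)..S.T, ⟪S.gfun (Amu μ) w t, S.gfun (Amu μ) w t⟫) := by
      rw [intervalIntegral.integral_congr (fun t _ => key t),
        intervalIntegral.integral_add (hint' μ v v)
          (((hint' μ v w).const_mul (2 * c)).add ((hint' μ w w).const_mul (c * c))),
        intervalIntegral.integral_add ((hint' μ v w).const_mul (2 * c))
          ((hint' μ w w).const_mul (c * c)),
        intervalIntegral.integral_const_mul, intervalIntegral.integral_const_mul]
    have hB : S.ι (S.val (v + c • w) 0) = S.ι (S.val v 0) + c • S.ι (S.val w 0) := by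
      rw [S.val_add_smul, map_add, S.ι.map_smul]
    rw [S.bmu_eq, S.bmu_eq, S.bmu_eq, S.bmu_eq, hI, hB, real_inner_add_add_self,
      real_inner_smul_right, real_inner_smul_left, real_inner_smul_right]
    ring
  refine ⟨⟨2 + 2 * cs ^ 2 + Ce ^ 2, by positivity, ?_⟩, ?_⟩
  · -- boundedness via Cauchy–Schwarz for the nonnegative quadratic form
    intro μ v w
    have hq : ∀ c : ℝ, 0 ≤ S.bmu (Amu μ) w w * (c * c) +
        (2 * S.bmu (Amu μ) v w) * c + S.bmu (Amu μ) v v := by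
      intro c
      have := hdnn μ (v + c • w)
      rw [hexp μ v w c] at this
      linarith
    have hd := discrim_le_zero hq
    rw [discrim] at hd
    have hcs2 : (S.bmu (Amu μ) v w) ^ 2 ≤ S.bmu (Amu μ) v v * S.bmu (Amu μ) w w := by
      nlinarith
    have hv := hdiag μ v
    have hw := hdiag μ w
    have hvn := hdnn μ v
    have hwn := hdnn μ w
    have hCb : (0:ℝ) ≤ 2 + 2 * cs ^ 2 + Ce ^ 2 := by positivity
    have hsq : (S.bmu (Amu μ) v w) ^ 2 ≤ ((2 + 2 * cs ^ 2 + Ce ^ 2) * ‖v‖ * ‖w‖) ^ 2 := by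
      have h1 : S.bmu (Amu μ) v v * S.bmu (Amu μ) w w ≤
          ((2 + 2 * cs ^ 2 + Ce ^ 2) * ‖v‖ ^ 2) * ((2 + 2 * cs ^ 2 + Ce ^ 2) * ‖w‖ ^ 2) :=
        mul_le_mul hv hw hwn (by positivity)
      nlinarith
    have habs : (0:ℝ) ≤ (2 + 2 * cs ^ 2 + Ce ^ 2) * ‖v‖ * ‖w‖ := by positivity
    have h2 : |S.bmu (Amu μ) v w| ^ 2 ≤ ((2 + 2 * cs ^ 2 + Ce ^ 2) * ‖v‖ * ‖w‖) ^ 2 := by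
      rwa [sq_abs]
    exact (pow_le_pow_iff_left₀ (abs_nonneg _) habs two_ne_zero).mp h2
  · -- coercivity
    refine ⟨cc ^ 2 / (2 * cc ^ 2 + 2 * cs ^ 2 + 1 + (2 * cs ^ 2 + 1) * cc), by positivity, ?_⟩
    intro μ v
    have hM : (0:ℝ) < 2 * cc ^ 2 + 2 * cs ^ 2 + 1 + (2 * cs ^ 2 + 1) * cc := by positivity
    rw [div_mul_eq_mul_div, div_le_iff₀ hM]
    -- notation
    have hftc := S.ftc v
    have h3 := hnormsq v
    have h5 := Ico μ v
    have h6 := Idle μ v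
    have hIg := hIg_nonneg μ v
    have hIv := hIv_nonneg v
    have hId := hId_nonneg v
    have hET : (0:ℝ) ≤ ‖S.ι (S.val v S.T)‖ ^ 2 := sq_nonneg _
    have hE0n : (0:ℝ) ≤ ‖S.ι (S.val v 0)‖ ^ 2 := sq_nonneg _
    rw [S.bmu_eq, real_inner_self_eq_norm_sq]
    -- from h5 and hftc : cc^2 * Iv ≤ Ig + cc * E0 - cc * ET ≤ Ig + cc * E0
    have h7 : cc ^ 2 * (∫ t in (0:ℝ)..S.T, ⟪S.val v t, S.val v t⟫) ≤
        (∫ t in (0:ℝ)..S.T, ⟪S.gfun (Amu μ) v t, S.gfun (Amu μ) v t⟫) +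
          cc * ‖S.ι (S.val v 0)‖ ^ 2 := by nlinarith
    -- ‖v‖² = Id + Iv ≤ 2 Ig + (2cs²+1) Iv
    have h8 : ‖v‖ ^ 2 ≤ 2 * (∫ t in (0:ℝ)..S.T, ⟪S.gfun (Amu μ) v t, S.gfun (Amu μ) v t⟫) +
        (2 * cs ^ 2 + 1) * ∫ t in (0:ℝ)..S.T, ⟪S.val v t, S.val v t⟫ := by linarith
    have p1 := mul_le_mul_of_nonneg_left h8 (by positivity : (0:ℝ) ≤ cc ^ 2)
    have p2 := mul_le_mul_of_nonneg_left h7 (by positivity : (0:ℝ) ≤ 2 * cs ^ 2 + 1)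
    nlinarith [mul_nonneg hcc.le hIg, mul_nonneg (mul_nonneg hcc.le hcc.le) hE0n,
      mul_nonneg (mul_nonneg hcs.le hcs.le) hIg,
      mul_nonneg (mul_nonneg hcs.le hcs.le) hE0n,
      mul_nonneg hcc.le (mul_nonneg (mul_nonneg hcs.le hcs.le) hIg),
      mul_nonneg (mul_nonneg (mul_nonneg hcc.le hcc.le) hcc.le) hIv,
      mul_nonneg hcc.le hE0n, hE0n, hIg, hcc.le, hcs.le]
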